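/- Let x be a closed unit interval [a, a+1] and z a unit interval intersecting x that is not equal (as a set) to any of [a-1, a], (a, a+1), [a+1, a+2], [a, a+1]. If a pairwise-disjoint family of open/closed unit intervals contains 3 intervals all intersecting z, then exactly 2 of those 3 intervals intersect x. -/
import Mathlib


/-- A set of reals is an open or closed unit interval. -/
def IsUnitInterval (s : Set ℝ) : Prop :=
  ∃ r : ℝ, s = Set.Icc r (r + 1) ∨ s = Set.Ioo r (r + 1)

lemma memIcc' {s : Set ℝ} {r t : ℝ} (hs : s = Set.Icc r (r+1) ∨ s = Set.Ioo r (r+1))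
    (ht : t ∈ s) : r ≤ t ∧ t ≤ r + 1 := by
  rcases hs with rfl | rfl
  · exact ⟨ht.1, ht.2⟩
  · exact ⟨le_of_lt ht.1, le_of_lt ht.2⟩

lemma bound' {s z : Set ℝ} {r c : ℝ} (hs : s = Set.Icc r (r+1) ∨ s = Set.Ioo r (r+1))
    (hz : z = Set.Icc c (c+1) ∨ z = Set.Ioo c (c+1)) (hne : (s ∩ z).Nonempty) :
    c - 1 ≤ r ∧ r ≤ c + 1 := by
  obtain ⟨t, hts, htz⟩ := hne
  have h1 := memIcc' hs hts
  have h2 := memIcc' hz htz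
  constructor <;> linarith [h1.1, h1.2, h2.1, h2.2]

lemma gap' {s t : Set ℝ} {r r' : ℝ} (hs : s = Set.Icc r (r+1) ∨ s = Set.Ioo r (r+1))
    (ht : t = Set.Icc r' (r'+1) ∨ t = Set.Ioo r' (r'+1)) (hd : s ∩ t = ∅) :
    1 ≤ |r - r'| := by
  by_contra h
  push_neg at h
  have h' := abs_lt.mp h
  set m := (r + r' + 1) / 2 with hm
  have hms : m ∈ s := by
    rcases hs with rfl | rfl
    · exact ⟨by linarith [h'.1, h'.2], by linarith [h'.1, h'.2]⟩
    · exact ⟨by linarith [h'.1, h'.2], by linarith [h'.1, h'.2]⟩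
  have hmt : m ∈ t := by
    rcases ht with rfl | rfl
    · exact ⟨by linarith [h'.1, h'.2], by linarith [h'.1, h'.2]⟩
    · exact ⟨by linarith [h'.1, h'.2], by linarith [h'.1, h'.2]⟩
  have : m ∈ s ∩ t := ⟨hms, hmt⟩
  rw [hd] at this
  exact this

lemma trich' {x y w c : ℝ} (bx : c - 1 ≤ x ∧ x ≤ c + 1) (byy : c - 1 ≤ y ∧ y ≤ c + 1)
    (bw : c - 1 ≤ w ∧ w ≤ c + 1) (gxy : 1 ≤ |x - y|) (gxw : 1 ≤ |x - w|)
    (gyw : 1 ≤ |y - w|) : x = c - 1 ∨ x = c + 0 ∨ x = c + 1 := by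
  have dxy : y ≤ x - 1 ∨ x + 1 ≤ y := by
    rcases le_abs.mp gxy with h | h
    · left; linarith
    · right; linarith
  have dxw : w ≤ x - 1 ∨ x + 1 ≤ w := by
    rcases le_abs.mp gxw with h | h
    · left; linarith
    · right; linarith
  have dyw : w ≤ y - 1 ∨ y + 1 ≤ w := by
    rcases le_abs.mp gyw with h | h
    · left; linarith
    · right; linarith
  rcases dxy with h1 | h1 <;> rcases dxw with h2 | h2 <;> rcases dyw with h3 | h3 <;>
    first
      | (left; linarith [bx.1, bx.2, byy.1, byy.2, bw.1, bw.2])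
      | (right; left; linarith [bx.1, bx.2, byy.1, byy.2, bw.1, bw.2])
      | (right; right; linarith [bx.1, bx.2, byy.1, byy.2, bw.1, bw.2])

lemma atLeft' {s z : Set ℝ} {r c : ℝ} (hrc : r + 1 = c)
    (hs : s = Set.Icc r (r+1) ∨ s = Set.Ioo r (r+1))
    (hz : z = Set.Icc c (c+1) ∨ z = Set.Ioo c (c+1))
    (hne : (s ∩ z).Nonempty) : s = Set.Icc (c-1) c ∧ z = Set.Icc c (c+1) := by
  obtain ⟨t, hts, htz⟩ := hne
  have h1 : t ≤ r + 1 := by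
    rcases hs with rfl | rfl
    · exact hts.2
    · exact le_of_lt hts.2
  have h2 : c ≤ t := by
    rcases hz with rfl | rfl
    · exact htz.1
    · exact le_of_lt htz.1
  have htc : t = c := by linarith
  constructor
  · rcases hs with rfl | rfl
    · rw [show c - 1 = r by linarith, show c = r + 1 by linarith]
    · exfalso; have := hts.2; linarith [htc]
  · rcases hz with rfl | rfl
    · rfl
    · exfalso; have := htz.1; linarith [htc]

lemma atRight' {s z : Set ℝ} {r c : ℝ} (hrc : r = c + 1)
    (hs : s = Set.Icc r (r+1) ∨ s = Set.Ioo r (r+1))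
    (hz : z = Set.Icc c (c+1) ∨ z = Set.Ioo c (c+1))
    (hne : (s ∩ z).Nonempty) : s = Set.Icc (c+1) (c+2) ∧ z = Set.Icc c (c+1) := by
  obtain ⟨t, hts, htz⟩ := hne
  have h1 : r ≤ t := by
    rcases hs with rfl | rfl
    · exact hts.1
    · exact le_of_lt hts.1
  have h2 : t ≤ c + 1 := by
    rcases hz with rfl | rfl
    · exact htz.2
    · exact le_of_lt htz.2
  have htc : t = c + 1 := by linarith
  constructor
  · rcases hs with rfl | rfl
    · rw [show c + 1 = r by linarith, show c + 2 = r + 1 by linarith]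
    · exfalso; have := hts.1; linarith [htc]
  · rcases hz with rfl | rfl
    · rfl
    · exfalso; have := htz.2; linarith [htc]

lemma atMid' {s t : Set ℝ} {r c : ℝ} (hrc : r = c)
    (hs : s = Set.Icc r (r+1) ∨ s = Set.Ioo r (r+1))
    (ht : t = Set.Icc (c-1) c) (hd : s ∩ t = ∅) : s = Set.Ioo c (c+1) := by
  rcases hs with rfl | rfl
  · exfalso
    have hc : c ∈ Set.Icc r (r+1) ∩ t := by
      refine ⟨⟨by linarith, by linarith⟩, ?_⟩
      rw [ht]; exact ⟨by linarith, le_refl c⟩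
    rw [hd] at hc
    exact hc
  · rw [hrc]
lemma structure3 {c : ℝ} {z s₁ s₂ s₃ : Set ℝ}
    (hz : z = Set.Icc c (c+1) ∨ z = Set.Ioo c (c+1))
    (hu₁ : IsUnitInterval s₁) (hu₂ : IsUnitInterval s₂) (hu₃ : IsUnitInterval s₃)
    (d12 : s₁ ∩ s₂ = ∅) (d13 : s₁ ∩ s₃ = ∅) (d23 : s₂ ∩ s₃ = ∅)
    (hi₁ : (s₁ ∩ z).Nonempty) (hi₂ : (s₂ ∩ z).Nonempty) (hi₃ : (s₃ ∩ z).Nonempty) :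
    z = Set.Icc c (c+1) ∧
      ({s₁, s₂, s₃} : Set (Set ℝ)) =
        {Set.Icc (c-1) c, Set.Ioo c (c+1), Set.Icc (c+1) (c+2)} := by
  obtain ⟨r₁, hr₁⟩ := hu₁
  obtain ⟨r₂, hr₂⟩ := hu₂
  obtain ⟨r₃, hr₃⟩ := hu₃
  have b₁ := bound' hr₁ hz hi₁
  have b₂ := bound' hr₂ hz hi₂
  have b₃ := bound' hr₃ hz hi₃
  have g12 := gap' hr₁ hr₂ d12
  have g13 := gap' hr₁ hr₃ d13
  have g23 := gap' hr₂ hr₃ d23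
  have g21 : 1 ≤ |r₂ - r₁| := by rwa [abs_sub_comm]
  have g31 : 1 ≤ |r₃ - r₁| := by rwa [abs_sub_comm]
  have g32 : 1 ≤ |r₃ - r₂| := by rwa [abs_sub_comm]
  have ne12 : r₁ ≠ r₂ := by intro h; rw [h, sub_self, abs_zero] at g12; linarith
  have ne13 : r₁ ≠ r₃ := by intro h; rw [h, sub_self, abs_zero] at g13; linarith
  have ne23 : r₂ ≠ r₃ := by intro h; rw [h, sub_self, abs_zero] at g23; linarith
  have e₁ := trich' b₁ b₂ b₃ g12 g13 g23
  have e₂ := trich' b₂ b₁ b₃ g21 g23 g13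
  have e₃ := trich' b₃ b₁ b₂ g31 g32 g12
  have d21 : s₂ ∩ s₁ = ∅ := by rw [Set.inter_comm]; exact d12
  have d31 : s₃ ∩ s₁ = ∅ := by rw [Set.inter_comm]; exact d13
  have d32 : s₃ ∩ s₂ = ∅ := by rw [Set.inter_comm]; exact d23
  rcases e₁ with rfl | rfl | rfl <;> rcases e₂ with rfl | rfl | rfl <;>
    rcases e₃ with rfl | rfl | rfl <;>
    first
    | (exact absurd rfl ne12)
    | (exact absurd rfl ne13)
    | (exact absurd rfl ne23)
    | skip
  -- six remaining cases: (r₁,r₂,r₃) a permutation of (c-1, c, c+1)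
  case _ => -- (c-1, c, c+1)
    obtain ⟨hs₁, hzz⟩ := atLeft' (by ring) hr₁ hz hi₁
    obtain ⟨hs₃, -⟩ := atRight' (by ring) hr₃ hz hi₃
    have hs₂ := atMid' (by ring) hr₂ hs₁ d21
    refine ⟨hzz, ?_⟩
    rw [hs₁, hs₂, hs₃]
  case _ => -- (c-1, c+1, c)
    obtain ⟨hs₁, hzz⟩ := atLeft' (by ring) hr₁ hz hi₁
    obtain ⟨hs₂, -⟩ := atRight' (by ring) hr₂ hz hi₂
    have hs₃ := atMid' (by ring) hr₃ hs₁ d31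
    refine ⟨hzz, ?_⟩
    rw [hs₁, hs₂, hs₃, Set.pair_comm (Set.Icc (c+1) (c+2)) (Set.Ioo c (c+1))]
  case _ => -- (c, c-1, c+1)
    obtain ⟨hs₂, hzz⟩ := atLeft' (by ring) hr₂ hz hi₂
    obtain ⟨hs₃, -⟩ := atRight' (by ring) hr₃ hz hi₃
    have hs₁ := atMid' (by ring) hr₁ hs₂ d12
    refine ⟨hzz, ?_⟩
    rw [hs₁, hs₂, hs₃, Set.insert_comm (Set.Ioo c (c+1)) (Set.Icc (c-1) c)]
  case _ => -- (c, c+1, c-1)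
    obtain ⟨hs₃, hzz⟩ := atLeft' (by ring) hr₃ hz hi₃
    obtain ⟨hs₂, -⟩ := atRight' (by ring) hr₂ hz hi₂
    have hs₁ := atMid' (by ring) hr₁ hs₃ d13
    refine ⟨hzz, ?_⟩
    rw [hs₁, hs₂, hs₃, Set.pair_comm (Set.Icc (c+1) (c+2)) (Set.Icc (c-1) c), Set.insert_comm (Set.Ioo c (c+1)) (Set.Icc (c-1) c)]
  case _ => -- (c+1, c-1, c)
    obtain ⟨hs₂, hzz⟩ := atLeft' (by ring) hr₂ hz hi₂
    obtain ⟨hs₁, -⟩ := atRight' (by ring) hr₁ hz hi₁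
    have hs₃ := atMid' (by ring) hr₃ hs₂ d32
    refine ⟨hzz, ?_⟩
    rw [hs₁, hs₂, hs₃, Set.insert_comm (Set.Icc (c+1) (c+2)) (Set.Icc (c-1) c), Set.pair_comm (Set.Icc (c+1) (c+2)) (Set.Ioo c (c+1))]
  case _ => -- (c+1, c, c-1)
    obtain ⟨hs₃, hzz⟩ := atLeft' (by ring) hr₃ hz hi₃
    obtain ⟨hs₁, -⟩ := atRight' (by ring) hr₁ hz hi₁
    have hs₂ := atMid' (by ring) hr₂ hs₃ d23
    refine ⟨hzz, ?_⟩
    rw [hs₁, hs₂, hs₃, Set.pair_comm (Set.Ioo c (c+1)) (Set.Icc (c-1) c), Set.insert_comm (Set.Icc (c+1) (c+2)) (Set.Icc (c-1) c), Set.pair_comm (Set.Icc (c+1) (c+2)) (Set.Ioo c (c+1))]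

/-- Let `x = [a, a+1]` and `z` a unit interval meeting `x`, not equal (as a
set) to any of `[a-1, a]`, `(a, a+1)`, `[a+1, a+2]`, `[a, a+1]`. If a
pairwise-disjoint family of open/closed unit intervals contains three
intervals all meeting `z`, then exactly 2 of those three meet `x`. -/
theorem stmt15 (a : ℝ) (z : Set ℝ) (hz : IsUnitInterval z)
    (hzx : (z ∩ Set.Icc a (a + 1)).Nonempty)
    (hznot : z ∉ ({Set.Icc (a - 1) a, Set.Ioo a (a + 1),
      Set.Icc (a + 1) (a + 2), Set.Icc a (a + 1)} : Set (Set ℝ)))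
    (F : Set (Set ℝ)) (hF : ∀ s ∈ F, IsUnitInterval s)
    (hdisj : F.Pairwise fun s t => s ∩ t = ∅)
    (s₁ s₂ s₃ : Set ℝ) (h₁ : s₁ ∈ F) (h₂ : s₂ ∈ F) (h₃ : s₃ ∈ F)
    (h12 : s₁ ≠ s₂) (h13 : s₁ ≠ s₃) (h23 : s₂ ≠ s₃)
    (hi₁ : (s₁ ∩ z).Nonempty) (hi₂ : (s₂ ∩ z).Nonempty)
    (hi₃ : (s₃ ∩ z).Nonempty) :
    ({s ∈ ({s₁, s₂, s₃} : Set (Set ℝ)) |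
      (s ∩ Set.Icc a (a + 1)).Nonempty}).ncard = 2 := by
  obtain ⟨c, hzc⟩ := hz
  obtain ⟨hzeq, hset⟩ := structure3 hzc (hF s₁ h₁) (hF s₂ h₂) (hF s₃ h₃)
    (hdisj h₁ h₂ h12) (hdisj h₁ h₃ h13) (hdisj h₂ h₃ h23) hi₁ hi₂ hi₃
  -- position of c relative to a
  obtain ⟨t, htz, hta⟩ := hzx
  rw [hzeq] at htz
  have hca1 : a - 1 ≤ c := by linarith [htz.2, hta.1]
  have hca2 : c ≤ a + 1 := by linarith [htz.1, hta.2]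
  simp only [Set.mem_insert_iff, Set.mem_singleton_iff, not_or] at hznot
  obtain ⟨hn1, -, hn3, hn4⟩ := hznot
  have hc1 : c ≠ a - 1 := by
    intro h; apply hn1; rw [hzeq, h, show a - 1 + 1 = a by ring]
  have hc2 : c ≠ a := by
    intro h; apply hn4; rw [hzeq, h]
  have hc3 : c ≠ a + 1 := by
    intro h; apply hn3; rw [hzeq, h, show a + 1 + 1 = a + 2 by ring]
  have hgt : a - 1 < c := lt_of_le_of_ne hca1 (Ne.symm hc1)
  have hlt : c < a + 1 := lt_of_le_of_ne hca2 hc3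
  rcases lt_or_gt_of_ne hc2 with hcl | hcr
  · -- c < a : [c-1,c] misses x, the other two meet it
    have hP1 : ¬ (Set.Icc (c-1) c ∩ Set.Icc a (a+1)).Nonempty := by
      rintro ⟨u, hu1, hu2⟩
      linarith [hu1.2, hu2.1]
    have hP2 : (Set.Ioo c (c+1) ∩ Set.Icc a (a+1)).Nonempty :=
      ⟨(a + c + 1) / 2, ⟨by linarith, by linarith⟩, ⟨by linarith, by linarith⟩⟩
    have hP3 : (Set.Icc (c+1) (c+2) ∩ Set.Icc a (a+1)).Nonempty :=
      ⟨c + 1, ⟨le_refl _, by linarith⟩, ⟨by linarith, by linarith⟩⟩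
    have key : {s ∈ ({s₁, s₂, s₃} : Set (Set ℝ)) | (s ∩ Set.Icc a (a + 1)).Nonempty}
        = {Set.Ioo c (c+1), Set.Icc (c+1) (c+2)} := by
      rw [hset]
      ext u
      simp only [Set.mem_sep_iff, Set.mem_insert_iff, Set.mem_singleton_iff]
      constructor
      · rintro ⟨rfl | rfl | rfl, hp⟩
        · exact absurd hp hP1
        · exact Or.inl rfl
        · exact Or.inr rfl
      · rintro (rfl | rfl)
        · exact ⟨Or.inr (Or.inl rfl), hP2⟩
        · exact ⟨Or.inr (Or.inr rfl), hP3⟩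
    rw [key]
    refine Set.ncard_pair ?_
    intro h
    have hm : c + 1 ∈ Set.Icc (c+1) (c+2) := ⟨le_refl _, by linarith⟩
    rw [← h] at hm
    exact absurd hm.2 (lt_irrefl _)
  · -- c > a : [c+1,c+2] misses x
    have hP1 : (Set.Icc (c-1) c ∩ Set.Icc a (a+1)).Nonempty :=
      ⟨c, ⟨by linarith, le_refl _⟩, ⟨by linarith, by linarith⟩⟩
    have hP2 : (Set.Ioo c (c+1) ∩ Set.Icc a (a+1)).Nonempty :=
      ⟨(c + a + 1) / 2, ⟨by linarith, by linarith⟩, ⟨by linarith, by linarith⟩⟩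
    have hP3 : ¬ (Set.Icc (c+1) (c+2) ∩ Set.Icc a (a+1)).Nonempty := by
      rintro ⟨u, hu1, hu2⟩
      linarith [hu1.1, hu2.2]
    have key : {s ∈ ({s₁, s₂, s₃} : Set (Set ℝ)) | (s ∩ Set.Icc a (a + 1)).Nonempty}
        = {Set.Icc (c-1) c, Set.Ioo c (c+1)} := by
      rw [hset]
      ext u
      simp only [Set.mem_sep_iff, Set.mem_insert_iff, Set.mem_singleton_iff]
      constructor
      · rintro ⟨rfl | rfl | rfl, hp⟩
        · exact Or.inl rfl
        · exact Or.inr rfl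
        · exact absurd hp hP3
      · rintro (rfl | rfl)
        · exact ⟨Or.inl rfl, hP1⟩
        · exact ⟨Or.inr (Or.inl rfl), hP2⟩
    rw [key]
    refine Set.ncard_pair ?_
    intro h
    have hm : c ∈ Set.Icc (c-1) c := ⟨by linarith, le_refl _⟩
    rw [h] at hm
    exact absurd hm.1 (lt_irrefl _)
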